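/- (Theorem 2.) Consider a continuous game with N players, strategy sets S_i ⊆ ℝ^d_+, joint strategy space S = ∏_{i=1}^N S_i, payoffs π_i : S → ℝ, and social function γ : ℝ^{Nd}_+ → ℝ_+ with γ(0) = 0. Suppose: γ is monotone; γ is playerwise DR-submodular; for all s, s' ∈ S, ∑_{i=1}^N [γ(s_i + s'_i, s_{-i}) − γ(s)] ≥ η (γ(s + s') − γ(s)) for some η ∈ (0, 1]; π_i(s) ≥ γ(s) − γ(0, s_{-i}) for every i and s ∈ S; and γ(s) ≥ ∑_{i=1}^N π_i(s) for every s ∈ S. Then for any coarse correlated equilibrium σ (with the relevant integrands integrable) and any s⋆ ∈ S, (1 + η) · ∫ γ(s) dσ(s) ≥ η · γ(s⋆); in particular the robust price of anarchy is at most (1 + η)/η. -/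

import Mathlib

open MeasureTheory

/-- `f` is monotone on `X`: `f x ≤ f y` whenever `x ≤ y` in `X`. -/
def MonotoneOnSet {ι : Type*} (X : Set (ι → ℝ)) (f : (ι → ℝ) → ℝ) : Prop :=
  ∀ ⦃x⦄, x ∈ X → ∀ ⦃y⦄, y ∈ X → x ≤ y → f x ≤ f y

/-- `f` is DR-submodular on `X`. -/
def DRSubmodularOn {ι : Type*} [DecidableEq ι] (X : Set (ι → ℝ)) (f : (ι → ℝ) → ℝ) : Prop :=
  ∀ ⦃x y : ι → ℝ⦄, x ∈ X → y ∈ X → x ≤ y →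
    ∀ i : ι, ∀ k : ℝ, 0 ≤ k →
      x + Pi.single i k ∈ X → y + Pi.single i k ∈ X →
        f (x + Pi.single i k) - f x ≥ f (y + Pi.single i k) - f y

/-- Replace player `i`'s block of the joint strategy `s` by `v`, i.e. the outcome
`(v, s₋ᵢ)`. -/
def upd {N d : ℕ} (s : Fin N × Fin d → ℝ) (i : Fin N) (v : Fin d → ℝ) :
    Fin N × Fin d → ℝ :=
  fun q => if q.1 = i then v q.2 else s q

/-- The joint strategy space `S = ∏ᵢ Sᵢ`, viewed inside `ℝ^{Nd}`. -/
def joint {N d : ℕ} (S : Fin N → Set (Fin d → ℝ)) : Set (Fin N × Fin d → ℝ) :=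
  {s | ∀ i : Fin N, (fun r => s (i, r)) ∈ S i}

/-- `γ` is playerwise DR-submodular on `ℝ^{Nd}_+`: for every player `i` and fixed strategies
of the other players, the map `sᵢ ↦ γ(sᵢ, s₋ᵢ)` is DR-submodular on `ℝ^d_+`. -/
def PlayerwiseDRSubmodular {N d : ℕ} (γ : (Fin N × Fin d → ℝ) → ℝ) : Prop :=
  ∀ (i : Fin N) (s : Fin N × Fin d → ℝ), 0 ≤ s →
    DRSubmodularOn {v : Fin d → ℝ | 0 ≤ v} (fun v => γ (upd s i v))

lemma dr_vec {d : ℕ} {f : (Fin d → ℝ) → ℝ}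
    (hf : DRSubmodularOn {v : Fin d → ℝ | 0 ≤ v} f)
    {x y v : Fin d → ℝ} (hx : 0 ≤ x) (hy : 0 ≤ y) (hv : 0 ≤ v) (hxy : x ≤ y) :
    f (x + v) - f x ≥ f (y + v) - f y := by
  set g : Finset (Fin d) → (Fin d → ℝ) := fun t r => if r ∈ t then v r else 0 with hg
  have hgnn : ∀ t, (0 : Fin d → ℝ) ≤ g t := by
    intro t r; simp only [hg]; split
    · exact hv r
    · exact le_refl 0
  have claim : ∀ t : Finset (Fin d), f (x + g t) - f x ≥ f (y + g t) - f y := by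
    intro t
    induction t using Finset.induction_on with
    | empty =>
        have : g ∅ = 0 := by funext r; simp [hg]
        simp [this]
    | @insert i t hi ih =>
        have hsingle : (0 : Fin d → ℝ) ≤ Pi.single i (v i) := by
          intro r; rw [Pi.single_apply]; split
          · exact hv i
          · exact le_refl 0
        have e : ∀ z : Fin d → ℝ, z + g (insert i t) = (z + g t) + Pi.single i (v i) := by
          intro z; funext r
          by_cases hr : r = i
          · subst hr; simp [hg, hi, Pi.single_apply]
          · simp [hg, hr, Pi.single_apply, Finset.mem_insert]
        have hx' : (0 : Fin d → ℝ) ≤ x + g t := le_add_of_le_of_nonneg hx (hgnn t)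
        have hy' : (0 : Fin d → ℝ) ≤ y + g t := le_add_of_le_of_nonneg hy (hgnn t)
        have hxy' : x + g t ≤ y + g t := add_le_add_left hxy _
        have key := hf hx' hy' hxy' i (v i) (hv i)
          (le_add_of_le_of_nonneg hx' hsingle) (le_add_of_le_of_nonneg hy' hsingle)
        rw [e x, e y]
        linarith
  have huniv : g Finset.univ = v := by funext r; simp [hg]
  have := claim Finset.univ
  rwa [huniv] at this

lemma upd_self {N d : ℕ} (s : Fin N × Fin d → ℝ) (i : Fin N) :
    upd s i (fun r => s (i, r)) = s := by
  funext q
  by_cases h : q.1 = i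
  · simp only [upd, if_pos h]; rw [← h]
  · simp [upd, h]

lemma upd_upd {N d : ℕ} (s : Fin N × Fin d → ℝ) (i : Fin N) (v w : Fin d → ℝ) :
    upd (upd s i v) i w = upd s i w := by
  funext q
  by_cases h : q.1 = i <;> simp [upd, h]

lemma upd_mem_joint {N d : ℕ} {S : Fin N → Set (Fin d → ℝ)}
    {s : Fin N × Fin d → ℝ} (hs : s ∈ joint S) {i : Fin N} {v : Fin d → ℝ}
    (hv : v ∈ S i) : upd s i v ∈ joint S := by
  intro j
  by_cases h : j = i
  · subst h; simpa [upd] using hv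
  · simpa [upd, h] using hs j

lemma joint_nonneg {N d : ℕ} {S : Fin N → Set (Fin d → ℝ)}
    (hS : ∀ i, ∀ v ∈ S i, 0 ≤ v) {s : Fin N × Fin d → ℝ} (hs : s ∈ joint S) :
    0 ≤ s := by
  intro q
  exact hS q.1 _ (hs q.1) q.2

lemma upd_nonneg {N d : ℕ} {s : Fin N × Fin d → ℝ} (hs : 0 ≤ s)
    {i : Fin N} {v : Fin d → ℝ} (hv : 0 ≤ v) : 0 ≤ upd s i v := by
  intro q
  by_cases h : q.1 = i
  · simpa [upd, h] using hv q.2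
  · simpa [upd, h] using hs q


/-- Theorem 2: if the monotone nonnegative social function `γ` is playerwise DR-submodular
with generalized submodularity ratio at least `η ∈ (0,1]`, and conditions (ii), (iii) of valid
utility games hold, then every coarse correlated equilibrium `σ` satisfies
`(1 + η) · 𝔼_{s∼σ}[γ(s)] ≥ η · γ(s⋆)`; i.e. the robust price of anarchy is at most
`(1 + η)/η`. -/
theorem poa_cce_generalized_submodularity {N d : ℕ}
    (S : Fin N → Set (Fin d → ℝ)) (hS : ∀ i, ∀ v ∈ S i, 0 ≤ v)
    (π : Fin N → (Fin N × Fin d → ℝ) → ℝ)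
    (γ : (Fin N × Fin d → ℝ) → ℝ) (hγ0 : γ 0 = 0)
    (hγnn : ∀ x : Fin N × Fin d → ℝ, 0 ≤ x → 0 ≤ γ x)
    (hmono : MonotoneOnSet {x : Fin N × Fin d → ℝ | 0 ≤ x} γ)
    (hplayer : PlayerwiseDRSubmodular γ)
    (η : ℝ) (hη0 : 0 < η) (hη1 : η ≤ 1)
    (hgen : ∀ s ∈ joint S, ∀ s' ∈ joint S,
      ∑ i : Fin N, (γ (upd s i (fun r => s (i, r) + s' (i, r))) - γ s) ≥
        η * (γ (s + s') - γ s))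
    (hpayoff : ∀ i : Fin N, ∀ s ∈ joint S, π i s ≥ γ s - γ (upd s i 0))
    (hsum : ∀ s ∈ joint S, γ s ≥ ∑ i : Fin N, π i s)
    (σ : Measure (Fin N × Fin d → ℝ)) [IsProbabilityMeasure σ]
    (hsupp : ∀ᵐ s ∂σ, s ∈ joint S)
    (hCCE : ∀ i : Fin N, ∀ v ∈ S i,
      (∫ s, π i s ∂σ) ≥ ∫ s, π i (upd s i v) ∂σ)
    (hint_γ : Integrable γ σ)
    (hint_π : ∀ i : Fin N, Integrable (π i) σ)
    (hint_dev : ∀ i : Fin N, ∀ v ∈ S i, Integrable (fun s => π i (upd s i v)) σ) :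
    ∀ sstar ∈ joint S, (1 + η) * (∫ s, γ s ∂σ) ≥ η * γ sstar := by
  intro sstar hstar
  have hstar_nn : (0 : Fin N × Fin d → ℝ) ≤ sstar := joint_nonneg hS hstar
  -- pointwise key inequality
  have key : ∀ s ∈ joint S,
      ∑ i : Fin N, π i (upd s i (fun r => sstar (i, r))) ≥ η * γ sstar - η * γ s := by
    intro s hs
    have hs_nn : (0 : Fin N × Fin d → ℝ) ≤ s := joint_nonneg hS hs
    have step1 : ∀ i : Fin N,
        π i (upd s i (fun r => sstar (i, r))) ≥
          γ (upd s i (fun r => s (i, r) + sstar (i, r))) - γ s := by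
      intro i
      have hsi : (0 : Fin d → ℝ) ≤ fun r => s (i, r) := fun r => hs_nn (i, r)
      have hvi : (0 : Fin d → ℝ) ≤ fun r => sstar (i, r) := fun r => hstar_nn (i, r)
      have hdr := dr_vec (hplayer i s hs_nn) (le_refl (0 : Fin d → ℝ)) hsi hvi hsi
      -- hdr : γ (upd s i (0 + v)) - γ (upd s i 0) ≥ γ (upd s i (sᵢ + v)) - γ (upd s i sᵢ)
      rw [zero_add, upd_self] at hdr
      have hmem : upd s i (fun r => sstar (i, r)) ∈ joint S :=
        upd_mem_joint hs (hstar i)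
      have hpay := hpayoff i _ hmem
      rw [upd_upd] at hpay
      have heq : ((fun r => s (i, r)) + fun r => sstar (i, r)) =
          (fun r => s (i, r) + sstar (i, r)) := rfl
      rw [heq] at hdr
      linarith
    have hsum1 : ∑ i : Fin N, π i (upd s i (fun r => sstar (i, r))) ≥
        ∑ i : Fin N, (γ (upd s i (fun r => s (i, r) + sstar (i, r))) - γ s) :=
      Finset.sum_le_sum fun i _ => step1 i
    have hgen' := hgen s hs sstar hstar
    have hmon : γ (s + sstar) ≥ γ sstar := by
      exact hmono hstar_nn (add_nonneg hs_nn hstar_nn) (le_add_of_nonneg_left hs_nn)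
    nlinarith
  -- integrate
  have hint_sumdev : Integrable (fun s => ∑ i : Fin N,
      π i (upd s i (fun r => sstar (i, r)))) σ := by
    apply integrable_finset_sum
    intro i _
    exact hint_dev i _ (hstar i)
  have hrhs_int : Integrable (fun s => η * γ sstar - η * γ s) σ :=
    (integrable_const _).sub (hint_γ.const_mul η)
  have hI1 : ∫ s, (∑ i : Fin N, π i (upd s i (fun r => sstar (i, r)))) ∂σ ≥
      ∫ s, (η * γ sstar - η * γ s) ∂σ := by
    apply integral_mono_ae hrhs_int hint_sumdev
    filter_upwards [hsupp] with s hs using key s hs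
  have hI1' : ∫ s, (η * γ sstar - η * γ s) ∂σ =
      η * γ sstar - η * ∫ s, γ s ∂σ := by
    rw [integral_sub (integrable_const _) (hint_γ.const_mul η), integral_const,
      integral_const_mul]
    simp
  have hI2 : ∫ s, (∑ i : Fin N, π i (upd s i (fun r => sstar (i, r)))) ∂σ =
      ∑ i : Fin N, ∫ s, π i (upd s i (fun r => sstar (i, r))) ∂σ :=
    integral_finset_sum _ fun i _ => hint_dev i _ (hstar i)
  have hI3 : ∑ i : Fin N, ∫ s, π i s ∂σ ≥
      ∑ i : Fin N, ∫ s, π i (upd s i (fun r => sstar (i, r))) ∂σ :=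
    Finset.sum_le_sum fun i _ => hCCE i _ (hstar i)
  have hI4 : ∫ s, γ s ∂σ ≥ ∑ i : Fin N, ∫ s, π i s ∂σ := by
    rw [← integral_finset_sum _ fun i _ => hint_π i]
    apply integral_mono_ae (integrable_finset_sum _ fun i _ => hint_π i) hint_γ
    filter_upwards [hsupp] with s hs using hsum s hs
  linarith
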